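/- Let x f : Fin N → EuclideanSpace ℝ (Fin d). Suppose λ : Fin N → Fin N → ℝ is symmetric, nonnegative (λ i j = λ j i ≥ 0), and satisfies f i + ∑ j, (λ i j) • (x j − x i) = 0 for all i, and suppose μ : Fin N → Fin N → ℝ is symmetric (μ i j = μ j i, possibly of either sign) and satisfies f i + ∑ j, (μ i j) • (x j − x i) = 0 for all i. Then ∑ i, ∑ j, λ i j * ‖x i − x j‖² ≤ ∑ i, ∑ j, |μ i j| * ‖x i − x j‖². (Discrete Michell optimality: a truss all of whose bars are in tension minimizes the total cost among all equilibrated trusses on the same nodes supporting the same loading.) -/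

import Mathlib

open scoped BigOperators

lemma michell_key (d N : ℕ)
    (x f : Fin N → EuclideanSpace ℝ (Fin d))
    (w : Fin N → Fin N → ℝ)
    (hw_sym : ∀ i j, w i j = w j i)
    (hw_eq : ∀ i, f i + ∑ j, w i j • (x j - x i) = 0) :
    ∑ i, ∑ j, w i j * ‖x i - x j‖ ^ 2
      = 2 * ∑ i, inner ℝ (f i) (x i) := by
  have h1 : ∀ i, (inner ℝ (f i) (x i) : ℝ)
      + ∑ j, w i j * inner ℝ (x j - x i) (x i) = 0 := by
    intro i
    have h0 : (inner ℝ (f i + ∑ j, w i j • (x j - x i)) (x i) : ℝ) = 0 := by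
      rw [hw_eq i]; exact inner_zero_left _
    simp only [inner_add_left, sum_inner, real_inner_smul_left] at h0
    exact h0
  have h2 : ∑ i, ∑ j, w i j * (inner ℝ (x j - x i) (x i) : ℝ)
      = - ∑ i, (inner ℝ (f i) (x i) : ℝ) := by
    rw [← Finset.sum_neg_distrib]
    apply Finset.sum_congr rfl
    intro i _
    linarith [h1 i]
  -- symmetrize
  have h3 : ∑ i, ∑ j, w i j * ‖x i - x j‖ ^ 2
      = - 2 * ∑ i, ∑ j, w i j * (inner ℝ (x j - x i) (x i) : ℝ) := by
    have hswap : ∑ i, ∑ j, w i j * (inner ℝ (x j - x i) (x i) : ℝ)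
        = ∑ i, ∑ j, w i j * (inner ℝ (x i - x j) (x j) : ℝ) := by
      rw [Finset.sum_comm]
      apply Finset.sum_congr rfl; intro i _
      apply Finset.sum_congr rfl; intro j _
      rw [hw_sym i j]
    calc ∑ i, ∑ j, w i j * ‖x i - x j‖ ^ 2
        = ∑ i, ∑ j, w i j * (- (inner ℝ (x j - x i) (x i) : ℝ)
            - (inner ℝ (x i - x j) (x j) : ℝ)) := by
          apply Finset.sum_congr rfl; intro i _
          apply Finset.sum_congr rfl; intro j _
          congr 1
          have : ‖x i - x j‖ ^ 2 = (inner ℝ (x i - x j) (x i - x j) : ℝ) :=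
            (real_inner_self_eq_norm_sq _).symm
          rw [this]
          simp only [inner_sub_left, inner_sub_right]
          rw [real_inner_comm (x j) (x i)]
          ring
      _ = - 2 * ∑ i, ∑ j, w i j * (inner ℝ (x j - x i) (x i) : ℝ) := by
          simp only [mul_sub, mul_neg, Finset.sum_sub_distrib, Finset.sum_neg_distrib]
          rw [← hswap]; ring
  rw [h3, h2]; ring

/-- Discrete Michell optimality: a truss all of whose bars are in tension
minimizes the total cost among all equilibrated trusses on the same nodes
supporting the same loading. -/
theorem michell_optimality (d N : ℕ)
    (x f : Fin N → EuclideanSpace ℝ (Fin d))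
    (lam : Fin N → Fin N → ℝ)
    (hlam_sym : ∀ i j, lam i j = lam j i)
    (hlam_nonneg : ∀ i j, 0 ≤ lam i j)
    (hlam_eq : ∀ i, f i + ∑ j, lam i j • (x j - x i) = 0)
    (mu : Fin N → Fin N → ℝ)
    (hmu_sym : ∀ i j, mu i j = mu j i)
    (hmu_eq : ∀ i, f i + ∑ j, mu i j • (x j - x i) = 0) :
    ∑ i, ∑ j, lam i j * ‖x i - x j‖ ^ 2
      ≤ ∑ i, ∑ j, |mu i j| * ‖x i - x j‖ ^ 2 := by
  have hl := michell_key d N x f lam hlam_sym hlam_eq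
  have hm := michell_key d N x f mu hmu_sym hmu_eq
  rw [hl, ← hm]
  apply Finset.sum_le_sum
  intro i _
  apply Finset.sum_le_sum
  intro j _
  have := le_abs_self (mu i j)
  nlinarith [sq_nonneg ‖x i - x j‖]
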